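/- Let q be a prime power, k and n positive integers, and G a loopless digraph on n vertices with minrank_q(G) ≤ k. Then the chromatic number of the directional complement of G satisfies χ(Ḡ) ≤ (q^k − 1)/(q − 1). Equivalently, the scalar linear index over F_q satisfies lind_q(G) ≥ log_q((q − 1)·χ(Ḡ) + 1). -/

import Mathlib

/-- `minrank F G` of a loopless digraph `G` on `{1,…,n}` over a field `F`: the minimum
rank of an `n × n` matrix `M` over `F` with `M i i ≠ 0` for all `i` and `M i j = 0`
whenever `i ≠ j` and `(i,j)` is not an edge of `G`. -/
noncomputable def minrank {n : ℕ} (F : Type) [Field F] (G : Fin n → Fin n → Prop) : ℕ :=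
  sInf {r | ∃ M : Matrix (Fin n) (Fin n) F, (∀ i, M i i ≠ 0) ∧
    (∀ i j, i ≠ j → ¬ G i j → M i j = 0) ∧ M.rank = r}

theorem chromatic_compl_le_of_minrank_le (q k n : ℕ) (hq : IsPrimePow q) (hk : 0 < k)
    (hn : 0 < n) (F : Type) [Field F] [Fintype F] (hF : Fintype.card F = q)
    (G : Fin n → Fin n → Prop) (hloopless : ∀ i, ¬ G i i)
    (hmr : minrank F G ≤ k) :
    ∃ c : Fin n → ℕ,
      (∀ i j : Fin n, i ≠ j → (¬ G i j ∨ ¬ G j i) → c i ≠ c j) ∧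
      (q - 1) * Nat.card (Set.range c) ≤ q ^ k - 1 := by
  classical
  -- extract a matrix achieving the minrank
  have hne : {r | ∃ M : Matrix (Fin n) (Fin n) F, (∀ i, M i i ≠ 0) ∧
      (∀ i j, i ≠ j → ¬ G i j → M i j = 0) ∧ M.rank = r}.Nonempty := by
    refine ⟨(1 : Matrix (Fin n) (Fin n) F).rank, 1, ?_, ?_, rfl⟩
    · intro i; simp [Matrix.one_apply]
    · intro i j hij _; simp [Matrix.one_apply, hij]
  obtain ⟨M, hdiag, hzero, hrank⟩ := Nat.sInf_mem hne
  rw [minrank] at hmr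
  rw [← hrank] at hmr
  -- proportionality relation on rows
  set Rel : Fin n → Fin n → Prop := fun i j => ∃ u : Fˣ, M j = (u : F) • M i with hRel
  have hrefl : ∀ i, Rel i i := fun i => ⟨1, by simp⟩
  have htrans : ∀ {i j l}, Rel i j → Rel j l → Rel i l := by
    rintro i j l ⟨u, hu⟩ ⟨v, hv⟩
    exact ⟨v * u, by rw [hv, hu, smul_smul]; norm_cast⟩
  have hsymm : ∀ {i j}, Rel i j → Rel j i := by
    rintro i j ⟨u, hu⟩
    exact ⟨u⁻¹, by rw [hu, smul_smul]; norm_cast; simp⟩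
  -- not proportional when there is a non-edge
  have hnotrel : ∀ i j : Fin n, i ≠ j → (¬ G i j ∨ ¬ G j i) → ¬ Rel i j := by
    rintro i j hij hG ⟨u, hu⟩
    rcases hG with hG | hG
    · have h0 : M i j = 0 := hzero i j hij hG
      have : M j j = (u : F) * M i j := by rw [hu]; simp
      exact hdiag j (by rw [this, h0, mul_zero])
    · have h0 : M j i = 0 := hzero j i (Ne.symm hij) hG
      have : M j i = (u : F) * M i i := by rw [hu]; simp
      have := this.symm.trans h0
      rcases mul_eq_zero.mp this with h | h
      · exact u.ne_zero h
      · exact hdiag i h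
  -- the coloring
  set c : Fin n → ℕ := fun i => sInf {m | ∃ j : Fin n, Rel i j ∧ (j : ℕ) = m} with hc
  have hcmem : ∀ i, ∃ j : Fin n, Rel i j ∧ (j : ℕ) = c i := by
    intro i
    exact Nat.sInf_mem (⟨(i : ℕ), i, hrefl i, rfl⟩ :
      {m | ∃ j : Fin n, Rel i j ∧ (j : ℕ) = m}.Nonempty)
  have hccongr : ∀ {i j}, Rel i j → c i = c j := by
    intro i j h
    have : {m | ∃ l : Fin n, Rel i l ∧ (l : ℕ) = m}
        = {m | ∃ l : Fin n, Rel j l ∧ (l : ℕ) = m} := by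
      ext m
      constructor
      · rintro ⟨l, hl, rfl⟩; exact ⟨l, htrans (hsymm h) hl, rfl⟩
      · rintro ⟨l, hl, rfl⟩; exact ⟨l, htrans h hl, rfl⟩
    simp only [hc, this]
  have hceq : ∀ {i j}, c i = c j → Rel i j := by
    intro i j h
    obtain ⟨a, ha, ha'⟩ := hcmem i
    obtain ⟨b, hb, hb'⟩ := hcmem j
    have : a = b := Fin.ext (by rw [ha', hb', h])
    exact htrans ha (hsymm (this ▸ hb))
  refine ⟨c, fun i j hij hG h => hnotrel i j hij hG (hceq h), ?_⟩
  -- counting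
  have hq2 : 2 ≤ q := hq.two_le
  set W : Submodule F (Fin n → F) := Submodule.span F (Set.range M) with hW
  have hWrank : Module.finrank F W = M.rank := (M.rank_eq_finrank_span_row).symm
  have : Fintype W := Fintype.ofFinite _
  have hWcard : Nat.card W = q ^ Module.finrank F W := by
    rw [Nat.card_eq_fintype_card, Module.card_eq_pow_finrank (K := F), hF]
  set T : Set (Fin n → F) := (W : Set (Fin n → F)) \ {0} with hT
  -- injection from colors × units into T
  have rep : ∀ m : Set.range c, {i : Fin n // c i = (m : ℕ)} := by
    rintro ⟨m, hm⟩
    exact ⟨hm.choose, hm.choose_spec⟩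
  set f : Set.range c × Fˣ → T := fun p =>
    ⟨(p.2 : F) • M (rep p.1).1, by
      constructor
      · exact Submodule.smul_mem _ _ (Submodule.subset_span ⟨(rep p.1).1, rfl⟩)
      · simp only [Set.mem_singleton_iff, smul_eq_zero, not_or]
        refine ⟨p.2.ne_zero, fun h => hdiag (rep p.1).1 ?_⟩
        rw [show M (rep p.1).1 (rep p.1).1 = (0 : Fin n → F) (rep p.1).1 from by rw [h]]
        rfl⟩ with hf
  have hfinj : Function.Injective f := by
    rintro ⟨m, u⟩ ⟨m', u'⟩ h
    have h' : (u : F) • M (rep m).1 = (u' : F) • M (rep m').1 := congrArg Subtype.val h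
    have hrel : Rel (rep m).1 (rep m').1 := by
      have h2 := congrArg (fun v => ((u'⁻¹ : Fˣ) : F) • v) h'
      simp only [smul_smul, ← Units.val_mul, inv_mul_cancel, Units.val_one, one_smul] at h2
      exact ⟨u'⁻¹ * u, h2.symm⟩
    have hmm : m = m' := Subtype.ext (((rep m).2.symm.trans (hccongr hrel)).trans (rep m').2)
    subst hmm
    have huu : (u : F) = (u' : F) := by
      have := congrFun h' (rep m).1
      simp only [Pi.smul_apply, smul_eq_mul] at this
      exact mul_right_cancel₀ (hdiag (rep m).1) this
    exact Prod.ext rfl (Units.ext huu)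
  have hle1 : Nat.card (Set.range c × Fˣ) ≤ Nat.card T :=
    Nat.card_le_card_of_injective f hfinj
  have hTcard : Nat.card T = q ^ Module.finrank F W - 1 := by
    have h1 : T.ncard = (W : Set (Fin n → F)).ncard - 1 :=
      Set.ncard_diff_singleton_of_mem (Submodule.zero_mem W)
    have h2 : (W : Set (Fin n → F)).ncard = q ^ Module.finrank F W := by
      rw [← Nat.card_coe_set_eq, SetLike.coe_sort_coe, hWcard]
    rw [Nat.card_coe_set_eq, h1, h2]
  have hfinal : Nat.card (Set.range c × Fˣ) = (q - 1) * Nat.card (Set.range c) := by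
    rw [Nat.card_prod, Nat.card_units, @Nat.card_eq_fintype_card F _, hF, mul_comm]
  have hpow : q ^ Module.finrank F W ≤ q ^ k := by
    have h3 : Module.finrank F W ≤ k := by rw [hWrank]; exact hmr
    have hq0 : 0 < q := lt_of_lt_of_le (by norm_num) hq2
    exact Nat.pow_le_pow_right hq0 h3
  calc (q - 1) * Nat.card (Set.range c) = Nat.card (Set.range c × Fˣ) := hfinal.symm
    _ ≤ Nat.card T := hle1
    _ = q ^ Module.finrank F W - 1 := hTcard
    _ ≤ q ^ k - 1 := Nat.sub_le_sub_right hpow 1
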